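/- If J is a face of the convex cone co(K), where K is a nonempty cone of symmetric matrices, then co(K ∩ J) = J. -/

import Mathlib

open Matrix Finset

private lemma face_aux {E : Type*} [AddCommGroup E] [Module ℝ E]
    (K J : Set E)
    (hface : ∀ x ∈ convexHull ℝ K, ∀ y ∈ convexHull ℝ K, ∀ t : ℝ, 0 < t → t < 1 →
        t • x + (1 - t) • y ∈ J → x ∈ J ∧ y ∈ J)
    {ι : Type*} (t : Finset ι) (w : ι → ℝ) (z : ι → E)
    (hw : ∀ i ∈ t, 0 < w i) (hne : t.Nonempty) (hz : ∀ i ∈ t, z i ∈ K)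
    (hmem : t.centerMass w z ∈ J) : t.centerMass w z ∈ convexHull ℝ (K ∩ J) := by
  classical
  induction t using Finset.induction_on with
  | empty => exact absurd hne (by simp)
  | @insert i s his ih =>
    rcases s.eq_empty_or_nonempty with rfl | hsne
    · rw [show (insert i (∅ : Finset ι)) = {i} by simp] at *
      rw [Finset.centerMass_singleton _ _ (ne_of_gt (hw i (by simp)))] at *
      exact subset_convexHull ℝ _ ⟨hz i (by simp), hmem⟩
    · have hwi : 0 < w i := hw i (by simp)
      have hws : 0 < ∑ j ∈ s, w j :=
        Finset.sum_pos (fun j hj => hw j (by simp [hj])) hsne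
      set S := w i + ∑ j ∈ s, w j with hS
      have hSpos : 0 < S := by positivity
      have hins : (insert i s).centerMass w z
          = (w i / S) • z i + ((∑ j ∈ s, w j) / S) • s.centerMass w z :=
        Finset.centerMass_insert _ _ _ his (ne_of_gt hws)
      have ha : 0 < w i / S := by positivity
      have hab : w i / S + (∑ j ∈ s, w j) / S = 1 := by field_simp; exact hS.symm
      have ha1 : w i / S < 1 := by nlinarith [div_pos hws hSpos]
      have hb : (∑ j ∈ s, w j) / S = 1 - w i / S := by linarith
      have hziK : z i ∈ convexHull ℝ K := subset_convexHull ℝ _ (hz i (by simp))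
      have hcmK : s.centerMass w z ∈ convexHull ℝ K :=
        Finset.centerMass_mem_convexHull _ (fun j hj => (hw j (by simp [hj])).le) hws
          (fun j hj => hz j (by simp [hj]))
      have hJ' : (w i / S) • z i + (1 - w i / S) • s.centerMass w z ∈ J := by
        rw [← hb, ← hins]; exact hmem
      obtain ⟨hziJ, hcmJ⟩ := hface _ hziK _ hcmK _ ha ha1 hJ'
      have h1 : z i ∈ convexHull ℝ (K ∩ J) :=
        subset_convexHull ℝ _ ⟨hz i (by simp), hziJ⟩
      have h2 : s.centerMass w z ∈ convexHull ℝ (K ∩ J) :=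
        ih (fun j hj => hw j (by simp [hj])) hsne (fun j hj => hz j (by simp [hj])) hcmJ
      rw [hins, hb]
      exact (convex_convexHull ℝ _) h1 h2 ha.le (by linarith) (by ring)

theorem stmt_13 {n : ℕ} (K J : Set (Matrix (Fin n) (Fin n) ℝ))
    (hKne : K.Nonempty)
    (hKcone : ∀ X ∈ K, ∀ c : ℝ, 0 < c → c • X ∈ K)
    (hJsub : J ⊆ convexHull ℝ K) (hJconv : Convex ℝ J)
    (hface : ∀ x ∈ convexHull ℝ K, ∀ y ∈ convexHull ℝ K, ∀ t : ℝ, 0 < t → t < 1 →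
        t • x + (1 - t) • y ∈ J → x ∈ J ∧ y ∈ J) :
    convexHull ℝ (K ∩ J) = J := by
  classical
  apply Set.Subset.antisymm
  · exact convexHull_min (Set.inter_subset_right) hJconv
  · intro x hx
    obtain ⟨ι, t, w, z, hw0, hw1, hz, hcm⟩ := by
      have := hJsub hx
      rw [_root_.convexHull_eq] at this
      exact this
    set t' := t.filter (fun i => w i ≠ 0) with ht'
    have hcm' : t'.centerMass w z = x := by
      rw [ht', Finset.centerMass_filter_ne_zero]; exact hcm
    have hw' : ∀ i ∈ t', 0 < w i := fun i hi => by
      rw [ht', Finset.mem_filter] at hi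
      exact lt_of_le_of_ne (hw0 i hi.1) (Ne.symm hi.2)
    have hsum' : ∑ i ∈ t', w i = 1 := by
      rw [ht', Finset.sum_filter_ne_zero]; exact hw1
    have hne' : t'.Nonempty := by
      by_contra h
      rw [Finset.not_nonempty_iff_eq_empty] at h
      rw [h] at hsum'; simp at hsum'
    have hz' : ∀ i ∈ t', z i ∈ K := fun i hi =>
      hz i (Finset.mem_filter.mp hi).1
    have := face_aux K J hface t' w z hw' hne' hz' (by rw [hcm']; exact hx)
    rwa [hcm'] at this
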